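/- Let ψ: ℝ → ℝ be measurable and suppose there exist C>0 and δ>1 such that |ψ(x)| ≤ C·(1+x²)^{-δ/2} for all x ∈ ℝ. For a bounded interval (c,d), y₁, y₂ ∈ ℝ and a > 0, set h_a(y₁,y₂) = (1/a)·∫_c^d ψ((x−y₁)/a)·ψ((x−y₂)/a) dx. Then for y₁ ≠ y₂ there is a constant C' (independent of a) such that |h_a(y₁,y₂)| ≤ C'·a^δ/|y₁−y₂|^δ; in particular lim_{a→0⁺} h_a(y₁,y₂) = 0 whenever y₁ ≠ y₂. Moreover, sup over a>0, y₁, y₂ of |h_a(y₁,y₂)| is finite. -/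

import Mathlib

open MeasureTheory Filter Real Set Topology

/-- The cross-term estimate in the proof of Theorem 2.4 (1): for
`h_a(y₁,y₂) = (1/a) ∫_c^d ψ((x-y₁)/a) ψ((x-y₂)/a) dx` one has, for `y₁ ≠ y₂`, a bound
`|h_a(y₁,y₂)| ≤ C' a^δ / |y₁-y₂|^δ` (whence `h_a(y₁,y₂) → 0` as `a → 0⁺`), and `h_a` is
bounded uniformly in `a`, `y₁`, `y₂`. -/
theorem cross_term_estimate
    (ψ : ℝ → ℝ) (hmeas : Measurable ψ)
    (C δ : ℝ) (hC : 0 < C) (hδ : 1 < δ)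
    (hdecay : ∀ x : ℝ, |ψ x| ≤ C * (1 + x ^ 2) ^ (-δ / 2))
    (c d : ℝ) (hcd : c < d) :
    (∀ y₁ y₂ : ℝ, y₁ ≠ y₂ →
      (∃ C' > (0:ℝ), ∀ a : ℝ, 0 < a →
        |(1 / a) * ∫ x in Ioo c d, ψ ((x - y₁) / a) * ψ ((x - y₂) / a)| ≤
          C' * a ^ δ / |y₁ - y₂| ^ δ) ∧
      Tendsto (fun a : ℝ =>
          (1 / a) * ∫ x in Ioo c d, ψ ((x - y₁) / a) * ψ ((x - y₂) / a))
        (𝓝[>] 0) (𝓝 0)) ∧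
    ∃ M : ℝ, ∀ a : ℝ, 0 < a → ∀ y₁ y₂ : ℝ,
      |(1 / a) * ∫ x in Ioo c d, ψ ((x - y₁) / a) * ψ ((x - y₂) / a)| ≤ M := by
  set f : ℝ → ℝ := fun t => (1 + t ^ 2) ^ (-δ / 2) with hf_def
  have hf_nonneg : ∀ t, 0 ≤ f t := fun t => Real.rpow_nonneg (by positivity) _
  have hf_le_one : ∀ t, f t ≤ 1 := fun t =>
    Real.rpow_le_one_of_one_le_of_nonpos (by nlinarith [sq_nonneg t]) (by linarith)
  have hf_int : Integrable f := by
    have h := integrable_rpow_neg_one_add_norm_sq (E := ℝ) (μ := volume) (r := δ)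
      (by simpa using hδ)
    simpa [Real.norm_eq_abs, sq_abs] using h
  set I : ℝ := ∫ t, f t with hI_def
  have hI_pos : 0 < I := by
    rw [hI_def]
    refine (integral_pos_iff_support_of_nonneg (fun t => hf_nonneg t) hf_int).mpr ?_
    have hsupp : Function.support f = Set.univ := by
      ext t
      simp only [Function.mem_support, Set.mem_univ, iff_true]
      exact ne_of_gt (Real.rpow_pos_of_pos (by positivity) _)
    rw [hsupp]
    simp
  have hint : ∀ a : ℝ, 0 < a → ∀ y : ℝ, Integrable (fun x => f ((x - y) / a)) := by
    intro a ha y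
    exact (hf_int.comp_div (ne_of_gt ha)).comp_sub_right y
  have hkey : ∀ a : ℝ, 0 < a → ∀ y : ℝ,
      ∫ x in Ioo c d, f ((x - y) / a) ≤ a * I := by
    intro a ha y
    have h2 : ∫ x, f ((x - y) / a) = a * I := by
      calc ∫ x, f ((x - y) / a) = ∫ x, f (x / a) :=
            integral_sub_right_eq_self (fun x => f (x / a)) y
        _ = |a| • ∫ t, f t := Measure.integral_comp_div f a
        _ = a * I := by rw [abs_of_pos ha]; simp [hI_def]
    calc ∫ x in Ioo c d, f ((x - y) / a) ≤ ∫ x, f ((x - y) / a) :=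
          setIntegral_le_integral (hint a ha y)
            (Filter.Eventually.of_forall fun x => hf_nonneg _)
      _ = a * I := h2
  have hψ_le : ∀ u : ℝ, |ψ u| ≤ C * f u := fun u => hdecay u
  have hψ_bdd : ∀ u : ℝ, |ψ u| ≤ C := fun u =>
    (hψ_le u).trans (mul_le_of_le_one_right hC.le (hf_le_one u))
  -- uniform bound
  have hM : ∀ a : ℝ, 0 < a → ∀ y₁ y₂ : ℝ,
      |(1 / a) * ∫ x in Ioo c d, ψ ((x - y₁) / a) * ψ ((x - y₂) / a)| ≤ C * C * I := by
    intro a ha y₁ y₂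
    have hb : |∫ x in Ioo c d, ψ ((x - y₁) / a) * ψ ((x - y₂) / a)| ≤
        ∫ x in Ioo c d, C * C * f ((x - y₁) / a) := by
      rw [← Real.norm_eq_abs]
      refine norm_integral_le_of_norm_le (((hint a ha y₁).restrict).const_mul (C * C))
        (Filter.Eventually.of_forall fun x => ?_)
      rw [Real.norm_eq_abs, abs_mul]
      calc |ψ ((x - y₁) / a)| * |ψ ((x - y₂) / a)| ≤ (C * f ((x - y₁) / a)) * C :=
            mul_le_mul (hψ_le _) (hψ_bdd _) (abs_nonneg _) (by positivity)
        _ = C * C * f ((x - y₁) / a) := by ring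
    have h2 : ∫ x in Ioo c d, C * C * f ((x - y₁) / a) ≤ C * C * (a * I) := by
      rw [integral_const_mul]
      exact mul_le_mul_of_nonneg_left (hkey a ha y₁) (by positivity)
    rw [abs_mul, abs_of_pos (one_div_pos.mpr ha)]
    calc (1 / a) * |∫ x in Ioo c d, ψ ((x - y₁) / a) * ψ ((x - y₂) / a)|
        ≤ (1 / a) * (C * C * (a * I)) :=
          mul_le_mul_of_nonneg_left (hb.trans h2) (by positivity)
      _ = C * C * I := by field_simp
  refine ⟨?_, ⟨C * C * I, hM⟩⟩
  intro y₁ y₂ hne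
  set r : ℝ := |y₁ - y₂| with hr_def
  have hr : 0 < r := abs_pos.mpr (sub_ne_zero.mpr hne)
  set C' : ℝ := 2 * (C * C) * (2 : ℝ) ^ δ * I with hC'_def
  have hC'pos : 0 < C' := by positivity
  have hbound : ∀ a : ℝ, 0 < a →
      |(1 / a) * ∫ x in Ioo c d, ψ ((x - y₁) / a) * ψ ((x - y₂) / a)| ≤
        C' * a ^ δ / r ^ δ := by
    intro a ha
    have hpt : ∀ x : ℝ, |ψ ((x - y₁) / a) * ψ ((x - y₂) / a)| ≤
        C * C * (2 * a / r) ^ δ * (f ((x - y₁) / a) + f ((x - y₂) / a)) := by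
      intro x
      set u := (x - y₁) / a with hu
      set v := (x - y₂) / a with hv
      have huv : r / a ≤ |u| + |v| := by
        have he : u - v = (y₂ - y₁) / a := by
          rw [hu, hv]; field_simp; ring
        calc r / a = |u - v| := by
              rw [he, abs_div, abs_of_pos ha, hr_def, abs_sub_comm]
          _ ≤ |u| + |v| := (abs_sub u v)
      have key : ∀ w : ℝ, r / (2 * a) ≤ |w| → f w ≤ (2 * a / r) ^ δ := by
        intro w hw
        have hw0 : 0 < |w| := lt_of_lt_of_le (by positivity) hw
        have h1 : f w ≤ (|w| ^ 2) ^ (-δ / 2) := by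
          refine Real.rpow_le_rpow_of_nonpos (by positivity) ?_ (by linarith)
          nlinarith [sq_abs w]
        have h2 : (|w| ^ 2 : ℝ) ^ (-δ / 2) = |w| ^ (-δ) := by
          rw [← Real.rpow_natCast |w| 2, ← Real.rpow_mul (abs_nonneg w)]
          congr 1
          ring
        have h3 : |w| ^ (-δ) ≤ (r / (2 * a)) ^ (-δ) :=
          Real.rpow_le_rpow_of_nonpos (by positivity) hw (by linarith)
        have h4 : (r / (2 * a)) ^ (-δ) = (2 * a / r) ^ δ := by
          rw [Real.rpow_neg (by positivity), ← Real.inv_rpow (by positivity)]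
          congr 1
          field_simp
        calc f w ≤ (|w| ^ 2) ^ (-δ / 2) := h1
          _ = |w| ^ (-δ) := h2
          _ ≤ (r / (2 * a)) ^ (-δ) := h3
          _ = (2 * a / r) ^ δ := h4
      have hcase : r / (2 * a) ≤ |u| ∨ r / (2 * a) ≤ |v| := by
        by_contra h
        push_neg at h
        have he : r / (2 * a) + r / (2 * a) = r / a := by
          have ha' : a ≠ 0 := ne_of_gt ha
          field_simp
          ring
        linarith [h.1, h.2]
      have hKnn : (0:ℝ) ≤ (2 * a / r) ^ δ := Real.rpow_nonneg (by positivity) _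
      rw [abs_mul]
      rcases hcase with h | h
      · calc |ψ u| * |ψ v| ≤ (C * (2 * a / r) ^ δ) * (C * f v) := by
              refine mul_le_mul ((hψ_le u).trans ?_) (hψ_le v) (abs_nonneg _) (by positivity)
              exact mul_le_mul_of_nonneg_left (key u h) hC.le
          _ = C * C * (2 * a / r) ^ δ * f v := by ring
          _ ≤ C * C * (2 * a / r) ^ δ * (f u + f v) := by
              refine mul_le_mul_of_nonneg_left ?_ (by positivity)
              linarith [hf_nonneg u]
      · calc |ψ u| * |ψ v| ≤ (C * f u) * (C * (2 * a / r) ^ δ) := by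
              refine mul_le_mul (hψ_le u) ((hψ_le v).trans ?_) (abs_nonneg _) (by positivity)
              exact mul_le_mul_of_nonneg_left (key v h) hC.le
          _ = C * C * (2 * a / r) ^ δ * f u := by ring
          _ ≤ C * C * (2 * a / r) ^ δ * (f u + f v) := by
              refine mul_le_mul_of_nonneg_left ?_ (by positivity)
              linarith [hf_nonneg v]
    have hb : |∫ x in Ioo c d, ψ ((x - y₁) / a) * ψ ((x - y₂) / a)| ≤
        C * C * (2 * a / r) ^ δ * (a * I + a * I) := by
      rw [← Real.norm_eq_abs]
      have hgint : Integrable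
          (fun x => C * C * (2 * a / r) ^ δ * (f ((x - y₁) / a) + f ((x - y₂) / a)))
          (volume.restrict (Ioo c d)) :=
        (((hint a ha y₁).restrict.add (hint a ha y₂).restrict).const_mul _)
      refine (norm_integral_le_of_norm_le hgint (Filter.Eventually.of_forall fun x => by
        rw [Real.norm_eq_abs]; exact hpt x)).trans ?_
      rw [integral_const_mul]
      refine mul_le_mul_of_nonneg_left ?_ (by positivity)
      rw [integral_add (hint a ha y₁).restrict (hint a ha y₂).restrict]
      exact add_le_add (hkey a ha y₁) (hkey a ha y₂)
    have heq : (1 / a) * (C * C * (2 * a / r) ^ δ * (a * I + a * I)) =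
        C' * a ^ δ / r ^ δ := by
      have h2a : (2 * a / r) ^ δ = 2 ^ δ * a ^ δ / r ^ δ := by
        rw [Real.div_rpow (by positivity) hr.le, Real.mul_rpow (by norm_num) ha.le]
      rw [h2a, hC'_def]
      field_simp
      ring
    rw [abs_mul, abs_of_pos (one_div_pos.mpr ha)]
    calc (1 / a) * |∫ x in Ioo c d, ψ ((x - y₁) / a) * ψ ((x - y₂) / a)|
        ≤ (1 / a) * (C * C * (2 * a / r) ^ δ * (a * I + a * I)) :=
          mul_le_mul_of_nonneg_left hb (by positivity)
      _ = C' * a ^ δ / r ^ δ := heq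
  refine ⟨⟨C', hC'pos, hbound⟩, ?_⟩
  have h0 : Tendsto (fun a : ℝ => a ^ δ) (𝓝[>] (0:ℝ)) (𝓝 0) := by
    have h := (Real.continuousAt_rpow_const 0 δ (Or.inr (by linarith))).tendsto
    rw [Real.zero_rpow (by linarith)] at h
    exact h.mono_left nhdsWithin_le_nhds
  have htend : Tendsto (fun a : ℝ => C' * a ^ δ / r ^ δ) (𝓝[>] (0:ℝ)) (𝓝 0) := by
    have h := (h0.const_mul C').div_const (r ^ δ)
    simpa using h
  refine squeeze_zero_norm' ?_ htend
  filter_upwards [eventually_mem_nhdsWithin] with a ha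
  rw [Real.norm_eq_abs]
  exact hbound a ha
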